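/- Let Ω ⊆ ℝ² be open, ω, c > 0, let p : Ω → ℂ be twice continuously differentiable and f : Ω → ℂ² continuously differentiable, and suppose Δp + (ω²/c²) p = div f on Ω. Define w := (i/ω)(f − ∇p). Then on Ω: (i) ∇ div w + (ω²/c²) w = (iω/c²) f; (ii) p = −(i c²/ω) div w; and (iii) for every x ∈ Ω̄ on which w, ∇p, f extend continuously and every unit vector n ∈ ℝ², w(x)·n = 0 if and only if ∇p(x)·n = f(x)·n. -/

import Mathlib

open Filter Topology

noncomputable section

/-- Points of the plane. -/
abbrev Pt : Type := Fin 2 → ℝ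

/-- Partial derivative `∂ᵢ g` of a complex-valued function on the plane. -/
def pd (i : Fin 2) (g : Pt → ℂ) (x : Pt) : ℂ := fderiv ℝ g x (Pi.single i 1)

/-- Divergence of a planar complex vector field. -/
def vdiv (v : Pt → Fin 2 → ℂ) (x : Pt) : ℂ := ∑ i, pd i (fun y => v y i) x

/-- Laplacian of a complex-valued function on the plane. -/
def lap (g : Pt → ℂ) (x : Pt) : ℂ := ∑ i, pd i (fun y => pd i g y) x

lemma pd_mul_sub (i : Fin 2) (a : ℂ) (g h : Pt → ℂ) (x : Pt)
    (hg : DifferentiableAt ℝ g x) (hh : DifferentiableAt ℝ h x) :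
    pd i (fun y => a * (g y - h y)) x = a * (pd i g x - pd i h x) := by
  unfold pd
  rw [fderiv_const_mul (hg.fun_sub hh), fderiv_fun_sub hg hh]
  simp [mul_sub]

/-- if `Δp + (ω²/c²)p = div f` on open `Ω ⊆ ℝ²` and `w := (i/ω)(f − ∇p)`,
then (i) `∇ div w + (ω²/c²) w = (iω/c²) f` on `Ω`; (ii) `p = −(ic²/ω) div w` on `Ω`;
(iii) at every point of the closure of `Ω` at which `w`, `∇p`, `f` extend continuously
(with limits `W`, `G`, `F`) and every unit vector `n`, `W·n = 0 ↔ G·n = F·n`. -/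
theorem stmt_10 (Ω : Set Pt) (hΩ : IsOpen Ω) (ω c : ℝ) (hω : 0 < ω) (hc : 0 < c)
    (p : Pt → ℂ) (f : Pt → Fin 2 → ℂ)
    (hp : ContDiffOn ℝ 2 p Ω) (hf : ContDiffOn ℝ 1 f Ω)
    (hHelm : ∀ x ∈ Ω, lap p x + ((ω : ℂ) ^ 2 / c ^ 2) * p x = vdiv f x)
    (w : Pt → Fin 2 → ℂ)
    (hw : ∀ x j, w x j = Complex.I / ω * (f x j - pd j p x)) :
    (∀ x ∈ Ω, ∀ j : Fin 2,
        pd j (fun y => vdiv w y) x + ((ω : ℂ) ^ 2 / c ^ 2) * w x j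
          = Complex.I * ω / c ^ 2 * f x j)
    ∧ (∀ x ∈ Ω, p x = -(Complex.I * c ^ 2 / ω) * vdiv w x)
    ∧ (∀ x ∈ closure Ω, ∀ W G F : Fin 2 → ℂ,
        Tendsto (fun y => (fun j => w y j)) (nhdsWithin x Ω) (nhds W) →
        Tendsto (fun y => (fun j => pd j p y)) (nhdsWithin x Ω) (nhds G) →
        Tendsto f (nhdsWithin x Ω) (nhds F) →
        ∀ n : Pt, (∑ i, (n i) ^ 2) = 1 →
          ((∑ j, W j * (n j : ℂ)) = 0 ↔ (∑ j, G j * (n j : ℂ)) = ∑ j, F j * (n j : ℂ))) := by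
  have hω' : (ω : ℂ) ≠ 0 := by exact_mod_cast hω.ne'
  have hc' : (c : ℂ) ≠ 0 := by exact_mod_cast hc.ne'
  have hI : Complex.I ≠ 0 := Complex.I_ne_zero
  -- differentiability facts
  have hfd : ∀ x ∈ Ω, ∀ i : Fin 2, DifferentiableAt ℝ (fun y => f y i) x := by
    intro x hx i
    have : ContDiffAt ℝ 1 f x := hf.contDiffAt (hΩ.mem_nhds hx)
    exact ((ContinuousLinearMap.proj (R := ℝ) (φ := fun _ : Fin 2 => ℂ) i).differentiableAt).comp x
      (this.differentiableAt one_ne_zero)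
  have hpd : ∀ x ∈ Ω, ∀ i : Fin 2, DifferentiableAt ℝ (fun y => pd i p y) x := by
    intro x hx i
    have h2 : ContDiffAt ℝ 2 p x := hp.contDiffAt (hΩ.mem_nhds hx)
    have h1 : ContDiffAt ℝ 1 (fderiv ℝ p) x := h2.fderiv_right (by norm_num)
    exact (h1.clm_apply contDiffAt_const).differentiableAt one_ne_zero
  have hpdiff : ∀ x ∈ Ω, DifferentiableAt ℝ p x := fun x hx =>
    (hp.contDiffAt (hΩ.mem_nhds hx)).differentiableAt (by norm_num)
  -- key identity: vdiv w = I ω / c² * p on Ω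
  have keyA : ∀ x ∈ Ω, vdiv w x = Complex.I * ω / c ^ 2 * p x := by
    intro x hx
    have hH := hHelm x hx
    have : vdiv w x = Complex.I / ω * (vdiv f x - lap p x) := by
      unfold vdiv lap
      rw [← Finset.sum_sub_distrib, Finset.mul_sum]
      refine Finset.sum_congr rfl fun i _ => ?_
      have : (fun y => w y i) = fun y => Complex.I / ω * (f y i - pd i p y) := by
        funext y; exact hw y i
      rw [this, pd_mul_sub i _ _ _ x (hfd x hx i) (hpd x hx i)]
    rw [this, ← hH]
    field_simp
    ring
  refine ⟨?_, ?_, ?_⟩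
  · -- part (i)
    intro x hx j
    have hcong : pd j (fun y => vdiv w y) x = pd j (fun y => Complex.I * ω / c ^ 2 * p y) x := by
      unfold pd
      congr 1
      apply Filter.EventuallyEq.fderiv_eq
      filter_upwards [hΩ.mem_nhds hx] with y hy
      exact keyA y hy
    have hpd2 : pd j (fun y => Complex.I * ω / c ^ 2 * p y) x
        = Complex.I * ω / c ^ 2 * pd j p x := by
      unfold pd
      rw [fderiv_const_mul (hpdiff x hx)]
      simp
    rw [hcong, hpd2, hw x j]
    field_simp
    ring
  · -- part (ii)
    intro x hx
    rw [keyA x hx]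
    field_simp
    have : Complex.I * Complex.I = -1 := Complex.I_mul_I
    linear_combination (p x) * this
  · -- part (iii)
    intro x hx W G F hW hG hF n hn
    have hne : (nhdsWithin x Ω).NeBot := mem_closure_iff_nhdsWithin_neBot.mp hx
    have hW' : Tendsto (fun y => (fun j => w y j)) (nhdsWithin x Ω)
        (nhds fun j => Complex.I / ω * (F j - G j)) := by
      rw [tendsto_pi_nhds]
      intro j
      have hFj : Tendsto (fun y => f y j) (nhdsWithin x Ω) (nhds (F j)) :=
        tendsto_pi_nhds.mp hF j
      have hGj : Tendsto (fun y => pd j p y) (nhdsWithin x Ω) (nhds (G j)) :=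
        tendsto_pi_nhds.mp hG j
      have := ((hFj.sub hGj).const_mul (Complex.I / ω))
      simpa [hw] using this
    have hWeq : W = fun j => Complex.I / ω * (F j - G j) := tendsto_nhds_unique hW hW'
    have hsum : (∑ j, W j * (n j : ℂ))
        = Complex.I / ω * ((∑ j, F j * (n j : ℂ)) - ∑ j, G j * (n j : ℂ)) := by
      rw [hWeq, ← Finset.sum_sub_distrib, Finset.mul_sum]
      exact Finset.sum_congr rfl fun j _ => by ring
    rw [hsum]
    constructor
    · intro h
      rcases mul_eq_zero.mp h with h' | h'
      · exact absurd h' (div_ne_zero hI hω')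
      · exact (sub_eq_zero.mp h').symm
    · intro h
      rw [h]
      simp


end
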